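/- In ℂ² ⊗ ℂ² ⊗ ℂ², the vectors ψ₁ = |000⟩ + |111⟩, ψ₂ = |001⟩ + |010⟩ + 2|100⟩, ψ₃ = |011⟩ + |101⟩ − |110⟩ are linearly independent and their span is a three-dimensional genuinely entangled subspace. -/

import Mathlib

noncomputable section

abbrev TriH (d₁ d₂ d₃ : ℕ) := EuclideanSpace ℂ (Fin d₁ × Fin d₂ × Fin d₃)

def BiprodA {d₁ d₂ d₃ : ℕ} (ψ : TriH d₁ d₂ d₃) : Prop :=
  ∃ (a : Fin d₁ → ℂ) (g : Fin d₂ × Fin d₃ → ℂ), ∀ i j k, ψ (i, j, k) = a i * g (j, k)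

def BiprodB {d₁ d₂ d₃ : ℕ} (ψ : TriH d₁ d₂ d₃) : Prop :=
  ∃ (b : Fin d₂ → ℂ) (g : Fin d₁ × Fin d₃ → ℂ), ∀ i j k, ψ (i, j, k) = b j * g (i, k)

def BiprodC {d₁ d₂ d₃ : ℕ} (ψ : TriH d₁ d₂ d₃) : Prop :=
  ∃ (c : Fin d₃ → ℂ) (g : Fin d₁ × Fin d₂ → ℂ), ∀ i j k, ψ (i, j, k) = c k * g (i, j)

def IsGME3 {d₁ d₂ d₃ : ℕ} (ψ : TriH d₁ d₂ d₃) : Prop :=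
  ψ ≠ 0 ∧ ¬ BiprodA ψ ∧ ¬ BiprodB ψ ∧ ¬ BiprodC ψ

def IsGES3 {d₁ d₂ d₃ : ℕ} (V : Submodule ℂ (TriH d₁ d₂ d₃)) : Prop :=
  ∀ ψ ∈ V, ψ ≠ 0 → IsGME3 ψ

def ket (i j k : Fin 2) : TriH 2 2 2 := WithLp.toLp 2 (fun p => if p = (i, j, k) then (1 : ℂ) else 0)

lemma GES2_li : LinearIndependent ℂ
      ![ket 0 0 0 + ket 1 1 1,
        ket 0 0 1 + ket 0 1 0 + (2 : ℂ) • ket 1 0 0,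
        ket 0 1 1 + ket 1 0 1 - ket 1 1 0] := by
  rw [Fintype.linearIndependent_iff]
  intro g hg
  simp only [Fin.sum_univ_three, Matrix.cons_val_zero, Matrix.cons_val_one, Matrix.head_cons,
    Matrix.cons_val_two, Matrix.tail_cons] at hg
  have e0 := congrFun (congrArg WithLp.ofLp hg) ((0:Fin 2),(0:Fin 2),(0:Fin 2))
  have e1 := congrFun (congrArg WithLp.ofLp hg) ((0:Fin 2),(0:Fin 2),(1:Fin 2))
  have e2 := congrFun (congrArg WithLp.ofLp hg) ((0:Fin 2),(1:Fin 2),(1:Fin 2))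
  simp [ket, Prod.ext_iff] at e0 e1 e2
  intro i
  fin_cases i <;> simp [e0, e1, e2]

/-- `ψ₁ = |000⟩ + |111⟩`, `ψ₂ = |001⟩ + |010⟩ + 2|100⟩`,
`ψ₃ = |011⟩ + |101⟩ − |110⟩` are linearly independent and span a three-dimensional
GES of `ℂ²⊗ℂ²⊗ℂ²`. -/
theorem GES2_three_qubits :
    LinearIndependent ℂ
      ![ket 0 0 0 + ket 1 1 1,
        ket 0 0 1 + ket 0 1 0 + (2 : ℂ) • ket 1 0 0,
        ket 0 1 1 + ket 1 0 1 - ket 1 1 0] ∧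
    Module.finrank ℂ (Submodule.span ℂ
      {ket 0 0 0 + ket 1 1 1,
       ket 0 0 1 + ket 0 1 0 + (2 : ℂ) • ket 1 0 0,
       ket 0 1 1 + ket 1 0 1 - ket 1 1 0}) = 3 ∧
    IsGES3 (Submodule.span ℂ
      {ket 0 0 0 + ket 1 1 1,
       ket 0 0 1 + ket 0 1 0 + (2 : ℂ) • ket 1 0 0,
       ket 0 1 1 + ket 1 0 1 - ket 1 1 0}) := by
  refine ⟨GES2_li, ?_, ?_⟩
  · have hset : ({ket 0 0 0 + ket 1 1 1,
       ket 0 0 1 + ket 0 1 0 + (2 : ℂ) • ket 1 0 0,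
       ket 0 1 1 + ket 1 0 1 - ket 1 1 0} : Set (TriH 2 2 2)) =
        Set.range ![ket 0 0 0 + ket 1 1 1,
          ket 0 0 1 + ket 0 1 0 + (2 : ℂ) • ket 1 0 0,
          ket 0 1 1 + ket 1 0 1 - ket 1 1 0] := by
      ext w
      simp [Fin.exists_fin_succ, Fin.exists_fin_two]
      tauto
    rw [hset, finrank_span_eq_card GES2_li]
    simp
  · intro ψ hmem hne
    rw [show ({ket 0 0 0 + ket 1 1 1,
       ket 0 0 1 + ket 0 1 0 + (2 : ℂ) • ket 1 0 0,
       ket 0 1 1 + ket 1 0 1 - ket 1 1 0} : Set (TriH 2 2 2)) =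
        insert (ket 0 0 0 + ket 1 1 1) (insert (ket 0 0 1 + ket 0 1 0 + (2 : ℂ) • ket 1 0 0)
          {ket 0 1 1 + ket 1 0 1 - ket 1 1 0}) from rfl,
      Submodule.mem_span_insert] at hmem
    obtain ⟨x, ψ', hψ', rfl⟩ := hmem
    rw [Submodule.mem_span_insert] at hψ'
    obtain ⟨y, ψ'', hψ'', rfl⟩ := hψ'
    rw [Submodule.mem_span_singleton] at hψ''
    obtain ⟨z, rfl⟩ := hψ''
    set ψ : TriH 2 2 2 := x • (ket 0 0 0 + ket 1 1 1) +
      (y • (ket 0 0 1 + ket 0 1 0 + (2 : ℂ) • ket 1 0 0) +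
       z • (ket 0 1 1 + ket 1 0 1 - ket 1 1 0)) with hψdef
    have v000 : ψ ((0:Fin 2),(0:Fin 2),(0:Fin 2)) = x := by simp [hψdef, ket, Prod.ext_iff]
    have v001 : ψ ((0:Fin 2),(0:Fin 2),(1:Fin 2)) = y := by simp [hψdef, ket, Prod.ext_iff]
    have v010 : ψ ((0:Fin 2),(1:Fin 2),(0:Fin 2)) = y := by simp [hψdef, ket, Prod.ext_iff]
    have v011 : ψ ((0:Fin 2),(1:Fin 2),(1:Fin 2)) = z := by simp [hψdef, ket, Prod.ext_iff]
    have v100 : ψ ((1:Fin 2),(0:Fin 2),(0:Fin 2)) = 2 * y := by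
      simp [hψdef, ket, Prod.ext_iff]; ring
    have v101 : ψ ((1:Fin 2),(0:Fin 2),(1:Fin 2)) = z := by simp [hψdef, ket, Prod.ext_iff]
    have v110 : ψ ((1:Fin 2),(1:Fin 2),(0:Fin 2)) = -z := by simp [hψdef, ket, Prod.ext_iff]
    have v111 : ψ ((1:Fin 2),(1:Fin 2),(1:Fin 2)) = x := by simp [hψdef, ket, Prod.ext_iff]
    have hxyz : ¬ (x = 0 ∧ y = 0 ∧ z = 0) := by
      rintro ⟨rfl, rfl, rfl⟩
      exact hne (by simp [hψdef])
    refine ⟨hne, ?_, ?_, ?_⟩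
    · rintro ⟨a, g, h⟩
      have key : ∀ (j k j' k' : Fin 2),
          ψ (0, j, k) * ψ (1, j', k') = ψ (0, j', k') * ψ (1, j, k) := by
        intro j k j' k'
        rw [h 0 j k, h 1 j' k', h 0 j' k', h 1 j k]; ring
      have m1 := key 0 0 0 1
      have m2 := key 0 0 1 0
      have m3 := key 0 0 1 1
      have m4 := key 0 1 1 1
      rw [v000, v101, v001, v100] at m1
      rw [v000, v110, v010, v100] at m2
      rw [v000, v111, v011, v100] at m3
      rw [v001, v111, v011, v101] at m4
      have hy : y = 0 := by
        have : y * y = 0 := by linear_combination (-m1 - m2)/4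
        exact mul_self_eq_zero.mp this
      have hx : x = 0 := by
        have : x * x = 0 := by rw [hy] at m3; linear_combination m3
        exact mul_self_eq_zero.mp this
      have hz : z = 0 := by
        have : z * z = 0 := by rw [hy] at m4; linear_combination -m4
        exact mul_self_eq_zero.mp this
      exact hxyz ⟨hx, hy, hz⟩
    · rintro ⟨b, g, h⟩
      have key : ∀ (i k i' k' : Fin 2),
          ψ (i, 0, k) * ψ (i', 1, k') = ψ (i', 0, k') * ψ (i, 1, k) := by
        intro i k i' k'
        rw [h i 0 k, h i' 1 k', h i' 0 k', h i 1 k]; ring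
      have m1 := key 0 0 0 1
      have m2 := key 0 0 1 0
      have m3 := key 0 0 1 1
      have m4 := key 0 1 1 1
      rw [v000, v011, v001, v010] at m1
      rw [v000, v110, v100, v010] at m2
      rw [v000, v111, v101, v010] at m3
      rw [v001, v111, v101, v011] at m4
      have hy : y = 0 := by
        have : y * y = 0 := by linear_combination (-m1 - m2)/3
        exact mul_self_eq_zero.mp this
      have hx : x = 0 := by
        have : x * x = 0 := by rw [hy] at m3; linear_combination m3
        exact mul_self_eq_zero.mp this
      have hz : z = 0 := by
        have : z * z = 0 := by rw [hy] at m4; linear_combination -m4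
        exact mul_self_eq_zero.mp this
      exact hxyz ⟨hx, hy, hz⟩
    · rintro ⟨c, g, h⟩
      have key : ∀ (i j i' j' : Fin 2),
          ψ (i, j, 0) * ψ (i', j', 1) = ψ (i', j', 0) * ψ (i, j, 1) := by
        intro i j i' j'
        rw [h i j 0, h i' j' 1, h i' j' 0, h i j 1]; ring
      have m1 := key 0 0 0 1
      have m2 := key 0 0 1 0
      have m3 := key 0 0 1 1
      have m4 := key 0 1 1 1
      rw [v000, v011, v010, v001] at m1
      rw [v000, v101, v100, v001] at m2
      rw [v000, v111, v110, v001] at m3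
      rw [v010, v111, v110, v011] at m4
      have hy : y = 0 := by
        have : y * y = 0 := by linear_combination m1 - m2
        exact mul_self_eq_zero.mp this
      have hx : x = 0 := by
        have : x * x = 0 := by rw [hy] at m3; linear_combination m3
        exact mul_self_eq_zero.mp this
      have hz : z = 0 := by
        have : z * z = 0 := by rw [hy] at m4; linear_combination m4
        exact mul_self_eq_zero.mp this
      exact hxyz ⟨hx, hy, hz⟩
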